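/- Let C be a symmetric p×p matrix with eigendecomposition C = U D Uᵀ (U orthogonal, D diagonal), γ > 0, λ > 0. Then Z* = U max(D − (λ/γ)I, 0) Uᵀ (entrywise max on diagonal) minimizes Z ↦ λ·trace(Z) + (γ/2)‖Z − C‖_F² over the cone of symmetric positive semidefinite matrices. -/

import Mathlib

open Matrix

/-- Squared Frobenius norm. -/
def frobSq {p : ℕ} (A : Matrix (Fin p) (Fin p) ℝ) : ℝ :=
  ∑ i, ∑ j, (A i j) ^ 2

lemma frobSq_eq_trace {p : ℕ} (A : Matrix (Fin p) (Fin p) ℝ) :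
    frobSq A = (Aᵀ * A).trace := by
  simp [frobSq, Matrix.trace, Matrix.mul_apply, Matrix.diag, sq]
  rw [Finset.sum_comm]

lemma conj_cancel {p : ℕ} {U : Matrix (Fin p) (Fin p) ℝ}
    (hU' : Uᵀ * U = 1) (M : Matrix (Fin p) (Fin p) ℝ) :
    Uᵀ * (U * M * Uᵀ) * U = M := by
  simp only [Matrix.mul_assoc]
  rw [hU', Matrix.mul_one, ← Matrix.mul_assoc, hU', Matrix.one_mul]

lemma frobSq_conj {p : ℕ} (U : Matrix (Fin p) (Fin p) ℝ)
    (hU : U * Uᵀ = 1) (A : Matrix (Fin p) (Fin p) ℝ) :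
    frobSq (Uᵀ * A * U) = frobSq A := by
  rw [frobSq_eq_trace, frobSq_eq_trace]
  have h1 : (Uᵀ * A * U)ᵀ = Uᵀ * Aᵀ * U := by
    simp [Matrix.transpose_mul, Matrix.mul_assoc]
  rw [h1]
  simp only [Matrix.mul_assoc]
  rw [← Matrix.mul_assoc U Uᵀ, hU, Matrix.one_mul, Matrix.trace_mul_comm]
  simp only [Matrix.mul_assoc]
  rw [hU, Matrix.mul_one]

lemma scalar_key (γ lam d w : ℝ) (hγ : 0 < γ) (hlam : 0 < lam) (hw : 0 ≤ w) :
    lam * max (d - lam / γ) 0 + γ / 2 * (max (d - lam / γ) 0 - d) ^ 2 ≤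
      lam * w + γ / 2 * (w - d) ^ 2 := by
  rcases le_or_gt (d - lam / γ) 0 with h | h
  · rw [max_eq_right h]
    have hd : γ * d ≤ lam := by
      have := mul_le_mul_of_nonneg_left (sub_nonpos.mp h) hγ.le
      rw [mul_div_cancel₀ _ hγ.ne'] at this; linarith
    nlinarith [mul_nonneg hγ.le (sq_nonneg w), mul_nonneg hw (sub_nonneg.mpr hd)]
  · rw [max_eq_left h.le]
    have key : lam / γ * γ = lam := div_mul_cancel₀ _ hγ.ne'
    nlinarith [mul_nonneg hγ.le (sq_nonneg (w - (d - lam / γ)))]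

theorem stmt11 (p : ℕ) (γ lam : ℝ) (hγ : 0 < γ) (hlam : 0 < lam)
    (U : Matrix (Fin p) (Fin p) ℝ) (d : Fin p → ℝ)
    (hU : U * Uᵀ = 1) (hU' : Uᵀ * U = 1)
    (C : Matrix (Fin p) (Fin p) ℝ) (hC : C = U * Matrix.diagonal d * Uᵀ) :
    let obj : Matrix (Fin p) (Fin p) ℝ → ℝ := fun Z =>
      lam * Z.trace + (γ / 2) * frobSq (Z - C)
    let Zstar : Matrix (Fin p) (Fin p) ℝ :=
      U * Matrix.diagonal (fun i => max (d i - lam / γ) 0) * Uᵀ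
    Zstar.PosSemidef ∧
    (∀ Z : Matrix (Fin p) (Fin p) ℝ, Z.IsSymm → Z.PosSemidef →
      obj Zstar ≤ obj Z) := by
  intro obj Zstar
  set ws : Fin p → ℝ := fun i => max (d i - lam / γ) 0 with hws
  have hUH : Uᴴ = Uᵀ := by
    ext i j; simp [Matrix.conjTranspose_apply, Matrix.transpose_apply]
  have hDiagPSD : (Matrix.diagonal ws).PosSemidef :=
    Matrix.posSemidef_diagonal_iff.mpr fun i => le_max_right _ _
  have hZstarPSD : Zstar.PosSemidef := by
    have := hDiagPSD.mul_mul_conjTranspose_same U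
    rwa [hUH] at this
  refine ⟨hZstarPSD, fun Z hZsymm hZpsd => ?_⟩
  set W : Matrix (Fin p) (Fin p) ℝ := Uᵀ * Z * U with hW
  have hWpsd : W.PosSemidef := by
    have := hZpsd.conjTranspose_mul_mul_same U
    rwa [hUH] at this
  have hWdiag : ∀ i, 0 ≤ W i i := fun i => by
    exact hWpsd.diag_nonneg
  have htr : W.trace = Z.trace := by
    rw [hW, Matrix.trace_mul_comm, ← Matrix.mul_assoc, hU, Matrix.one_mul]
  have hCd : Uᵀ * C * U = Matrix.diagonal d := by
    rw [hC, conj_cancel hU']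
  have hfrob : frobSq (Z - C) = frobSq (W - Matrix.diagonal d) := by
    have h : W - Matrix.diagonal d = Uᵀ * (Z - C) * U := by
      rw [Matrix.mul_sub, Matrix.sub_mul, ← hW, hCd]
    rw [h, frobSq_conj U hU]
  have hWs : Uᵀ * Zstar * U = Matrix.diagonal ws := conj_cancel hU' _
  have htrs : Zstar.trace = ∑ i, ws i := by
    have h2 : (Uᵀ * Zstar * U).trace = Zstar.trace := by
      rw [Matrix.trace_mul_comm, ← Matrix.mul_assoc, hU, Matrix.one_mul]
    rw [← h2, hWs, Matrix.trace_diagonal]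
  have hfrobs : frobSq (Zstar - C) = ∑ i, (ws i - d i) ^ 2 := by
    have h1 : frobSq (Zstar - C) = frobSq (Matrix.diagonal ws - Matrix.diagonal d) := by
      rw [← frobSq_conj U hU (Zstar - C), Matrix.mul_sub, Matrix.sub_mul, hWs, hCd]
    rw [h1, frobSq]
    refine Finset.sum_congr rfl fun i _ => ?_
    rw [Finset.sum_eq_single i]
    · simp [Matrix.sub_apply, Matrix.diagonal_apply_eq]
    · intro j _ hj
      simp [Matrix.sub_apply, Matrix.diagonal_apply_ne' _ hj]
    · exact fun h => absurd (Finset.mem_univ i) h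
  have hobjZ : obj Z = lam * W.trace + γ / 2 * frobSq (W - Matrix.diagonal d) := by
    simp only [obj, htr, hfrob]
  have hfrobW : ∑ i, (W i i - d i) ^ 2 ≤ frobSq (W - Matrix.diagonal d) := by
    rw [frobSq]
    apply Finset.sum_le_sum
    intro i _
    have h : (W i i - d i) ^ 2 = ((W - Matrix.diagonal d) i i) ^ 2 := by
      simp [Matrix.sub_apply, Matrix.diagonal_apply_eq]
    rw [h]
    exact Finset.single_le_sum (f := fun j => ((W - Matrix.diagonal d) i j) ^ 2)
      (fun j _ => sq_nonneg _) (Finset.mem_univ i)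
  have key : ∑ i, (lam * ws i + γ / 2 * (ws i - d i) ^ 2) ≤
      ∑ i, (lam * W i i + γ / 2 * (W i i - d i) ^ 2) :=
    Finset.sum_le_sum fun i _ => scalar_key γ lam (d i) (W i i) hγ hlam (hWdiag i)
  have hobjZs : obj Zstar = ∑ i, (lam * ws i + γ / 2 * (ws i - d i) ^ 2) := by
    simp only [obj, htrs, hfrobs, Finset.sum_add_distrib, Finset.mul_sum]
  rw [hobjZs, hobjZ]
  have hWtr : W.trace = ∑ i, W i i := by simp [Matrix.trace, Matrix.diag]
  calc ∑ i, (lam * ws i + γ / 2 * (ws i - d i) ^ 2)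
      ≤ ∑ i, (lam * W i i + γ / 2 * (W i i - d i) ^ 2) := key
    _ = lam * W.trace + γ / 2 * ∑ i, (W i i - d i) ^ 2 := by
        rw [hWtr, Finset.sum_add_distrib, Finset.mul_sum, Finset.mul_sum]
    _ ≤ lam * W.trace + γ / 2 * frobSq (W - Matrix.diagonal d) := by gcongr
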